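/- (FDR control of the Benjamini–Liu-type step-down under PRDSS.) Let H be finite of cardinality m with m₀ = |H₀| > 0 true nulls (counting measure), p-values with P(p_h ≤ t) ≤ t for h ∈ H₀. Assume the p-values of H₁ are PRDSS on H₀: for every measurable nondecreasing D ⊆ [0,1]^{H₁} and every h₀ ∈ H₀, u ↦ P((p_h)_{h∈H₁} ∈ D | p_{h₀} ≤ u) is nondecreasing. Let R be the step-down procedure with threshold collection Δ(i) = α m/(m−i+1)², i.e., R rejects the hypotheses corresponding to p_(1), …, p_(k̂) where k̂ = max{k : ∀ j ≤ k, p_(j) ≤ Δ(j)} (k̂ = 0 if p_(1) > Δ(1)). Then FDR(R) ≤ α. -/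

import Mathlib

open MeasureTheory ENNReal Set Finset

set_option maxHeartbeats 2000000

noncomputable def kfun {ι : Type*} [DecidableEq ι] (H₁ : Finset ι) (Δ : ℕ → ℝ) (m : ℕ) (z : ι → ℝ) : ℕ :=
  @Nat.findGreatest (fun k => ∀ j, 1 ≤ j → j ≤ k → j ≤ ((H₁.filter (fun h => z h ≤ Δ j)).card))
    (Classical.decPred _) m

lemma kfun_le {ι : Type*} [DecidableEq ι] (H₁ : Finset ι) (Δ : ℕ → ℝ) (m : ℕ) (z : ι → ℝ) :
    kfun H₁ Δ m z ≤ m :=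
  @Nat.findGreatest_le (fun k => ∀ j, 1 ≤ j → j ≤ k → j ≤ ((H₁.filter (fun h => z h ≤ Δ j)).card))
    (Classical.decPred _) m

lemma kfun_max {ι : Type*} [DecidableEq ι] (H₁ : Finset ι) (Δ : ℕ → ℝ) (m : ℕ) (z : ι → ℝ)
    {w : ℕ} (hw : w ≤ m)
    (h : ∀ j, 1 ≤ j → j ≤ w → j ≤ ((H₁.filter (fun h => z h ≤ Δ j)).card)) :
    w ≤ kfun H₁ Δ m z :=
  @Nat.le_findGreatest w
    (fun k => ∀ j, 1 ≤ j → j ≤ k → j ≤ ((H₁.filter (fun h => z h ≤ Δ j)).card))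
    (Classical.decPred _) m hw h

lemma kfun_eq_iff {ι : Type*} [DecidableEq ι] (H₁ : Finset ι) (Δ : ℕ → ℝ) (m : ℕ) (z : ι → ℝ) :
    kfun H₁ Δ m z ≤ m ∧
    (kfun H₁ Δ m z ≠ 0 → ∀ j, 1 ≤ j → j ≤ kfun H₁ Δ m z →
      j ≤ ((H₁.filter (fun h => z h ≤ Δ j)).card)) ∧
    ∀ ⦃n⦄, kfun H₁ Δ m z < n → n ≤ m →
      ¬(∀ j, 1 ≤ j → j ≤ n → j ≤ ((H₁.filter (fun h => z h ≤ Δ j)).card)) :=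
  (@Nat.findGreatest_eq_iff (kfun H₁ Δ m z) m
    (fun k => ∀ j, 1 ≤ j → j ≤ k → j ≤ ((H₁.filter (fun h => z h ≤ Δ j)).card))
    (Classical.decPred _)).mp rfl

lemma kfun_spec {ι : Type*} [DecidableEq ι] (H₁ : Finset ι) (Δ : ℕ → ℝ) (m : ℕ) (z : ι → ℝ)
    {j : ℕ} (hj1 : 1 ≤ j) (hj : j ≤ kfun H₁ Δ m z) :
    j ≤ ((H₁.filter (fun h => z h ≤ Δ j)).card) :=
  (kfun_eq_iff H₁ Δ m z).2.1 (by omega) j hj1 hj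

lemma kfun_not {ι : Type*} [DecidableEq ι] (H₁ : Finset ι) (Δ : ℕ → ℝ) (m : ℕ) (z : ι → ℝ)
    {n : ℕ} (hn : kfun H₁ Δ m z < n) (hnm : n ≤ m) :
    ∃ j, 1 ≤ j ∧ j ≤ n ∧ ((H₁.filter (fun h => z h ≤ Δ j)).card) < j := by
  have h := (kfun_eq_iff H₁ Δ m z).2.2 hn hnm
  push_neg at h
  obtain ⟨j, hj1, hj2, hj3⟩ := h
  exact ⟨j, hj1, hj2, hj3⟩


lemma DC_core {Ω : Type*} [MeasurableSpace Ω] (P : Measure Ω) [IsProbabilityMeasure P]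
    (m : ℕ) (c : ℝ) (hc : 0 ≤ c) (U : Ω → ℝ)
    (A : ℕ → Set Ω) (hA : ∀ v, MeasurableSet (A v)) (hU : Measurable U)
    (hsup : ∀ t : ℝ, 0 ≤ t → P {ω | U ω ≤ t} ≤ ENNReal.ofReal t)
    (hanti : ∀ v, A (v+1) ⊆ A v)
    (hprds : ∀ v : ℕ, 1 ≤ v → 0 < P {ω | U ω ≤ c/((v:ℝ)+1)} →
       P (A (v+1) ∩ {ω | U ω ≤ c/((v:ℝ)+1)}) / P {ω | U ω ≤ c/((v:ℝ)+1)}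
         ≤ P (A (v+1) ∩ {ω | U ω ≤ c/(v:ℝ)}) / P {ω | U ω ≤ c/(v:ℝ)}) :
    ∑ i ∈ Finset.range m, ENNReal.ofReal (((i:ℝ)+1)) *
        P ((A (i+1) \ A (i+2)) ∩ {ω | U ω ≤ c/((i:ℝ)+1)}) ≤ ENNReal.ofReal c := by
  classical
  have hmU : ∀ t : ℝ, MeasurableSet {ω | U ω ≤ t} := fun t => hU measurableSet_Iic
  set β : ℕ → ℝ := fun v => (P {ω | U ω ≤ c/(v:ℝ)}).toReal with hβdef
  set Aa : ℕ → ℝ := fun v => (P (A v ∩ {ω | U ω ≤ c/(v:ℝ)})).toReal with hAadef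
  set Bb : ℕ → ℝ := fun v => (P (A (v+1) ∩ {ω | U ω ≤ c/(v:ℝ)})).toReal with hBbdef
  set Rr : ℕ → ℝ := fun v => Aa v / β v with hRrdef
  set Ss : ℕ → ℝ := fun v => Bb v / β v with hSsdef
  have hfin : ∀ s : Set Ω, P s ≠ ⊤ := fun s => measure_ne_top P s
  have hβnn : ∀ v, 0 ≤ β v := fun v => ENNReal.toReal_nonneg
  have hAale : ∀ v, Aa v ≤ β v := fun v =>
    ENNReal.toReal_mono (hfin _) (measure_mono inter_subset_right)
  have hBble : ∀ v, Bb v ≤ Aa v := fun v =>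
    ENNReal.toReal_mono (hfin _) (measure_mono (inter_subset_inter_left _ (hanti v)))
  have hBbnn : ∀ v, 0 ≤ Bb v := fun v => ENNReal.toReal_nonneg
  have hAann : ∀ v, 0 ≤ Aa v := fun v => ENNReal.toReal_nonneg
  have hβle : ∀ v : ℕ, 1 ≤ v → β v ≤ c / (v:ℝ) := by
    intro v hv
    have hv' : (0:ℝ) < v := by exact_mod_cast hv
    have := hsup (c/(v:ℝ)) (by positivity)
    calc β v ≤ (ENNReal.ofReal (c/(v:ℝ))).toReal := ENNReal.toReal_mono ofReal_ne_top this
      _ = c/(v:ℝ) := ENNReal.toReal_ofReal (by positivity)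
  -- measure of the difference
  have hPE : ∀ v : ℕ, (P ((A v \ A (v+1)) ∩ {ω | U ω ≤ c/(v:ℝ)})).toReal = Aa v - Bb v := by
    intro v
    have hset : (A v \ A (v+1)) ∩ {ω | U ω ≤ c/(v:ℝ)}
        = (A v ∩ {ω | U ω ≤ c/(v:ℝ)}) \ (A (v+1) ∩ {ω | U ω ≤ c/(v:ℝ)}) := by
      ext ω; simp only [Set.mem_inter_iff, Set.mem_diff, Set.mem_setOf_eq]; tauto
    have hdiff := measure_diff (μ := P)
      (inter_subset_inter_left _ (hanti v))
      (((hA (v+1)).inter (hmU (c/(v:ℝ)))).nullMeasurableSet) (hfin _)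
    rw [hset, hdiff,
      ENNReal.toReal_sub_of_le (measure_mono (inter_subset_inter_left _ (hanti v))) (hfin _)]
  -- Ss v ≥ Rr (v+1) for v ≥ 1
  have hSR : ∀ v : ℕ, 1 ≤ v → Rr (v+1) ≤ Ss v := by
    intro v hv
    have hcast : (((v+1:ℕ)):ℝ) = (v:ℝ)+1 := by push_cast; ring
    by_cases h0 : P {ω | U ω ≤ c/((v:ℝ)+1)} = 0
    · have hz : P (A (v+1) ∩ {ω | U ω ≤ c/(((v+1:ℕ)):ℝ)}) = 0 := by
        rw [hcast]
        exact le_antisymm (le_trans (measure_mono inter_subset_right) (le_of_eq h0)) zero_le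
      have hA0 : Aa (v+1) = 0 := by
        show (P (A (v+1) ∩ {ω | U ω ≤ c/(((v+1:ℕ)):ℝ)})).toReal = 0
        rw [hz]; simp
      simp only [hRrdef, hA0, zero_div]
      exact div_nonneg (hBbnn v) (hβnn v)
    · have hpos : 0 < P {ω | U ω ≤ c/((v:ℝ)+1)} := lt_of_le_of_ne zero_le (Ne.symm h0)
      have key := hprds v hv hpos
      have hRHSfin : P (A (v+1) ∩ {ω | U ω ≤ c/(v:ℝ)}) / P {ω | U ω ≤ c/(v:ℝ)} ≠ ⊤ := by
        have hsub : {ω | U ω ≤ c/((v:ℝ)+1)} ⊆ {ω | U ω ≤ c/(v:ℝ)} := by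
          intro ω hω
          have hv' : (0:ℝ) < v := by exact_mod_cast hv
          have : c/((v:ℝ)+1) ≤ c/(v:ℝ) := by gcongr; linarith
          exact le_trans hω this
        have : 0 < P {ω | U ω ≤ c/(v:ℝ)} := lt_of_lt_of_le hpos (measure_mono hsub)
        exact ne_of_lt (ENNReal.div_lt_top (hfin _) (ne_of_gt this))
      have h2 := ENNReal.toReal_mono hRHSfin key
      rw [ENNReal.toReal_div, ENNReal.toReal_div] at h2
      simp only [hRrdef, hSsdef, hAadef, hBbdef, hβdef, hcast]
      exact h2
  -- real inequality
  have hreal : ∑ i ∈ Finset.range m, ((i:ℝ)+1) * (Aa (i+1) - Bb (i+1)) ≤ c := by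
    have hterm : ∀ i ∈ Finset.range m, ((i:ℝ)+1) * (Aa (i+1) - Bb (i+1))
        ≤ c * (Rr (i+1) - Ss (i+1)) := by
      intro i _
      set v := i + 1 with hvdef
      have hvcast : ((v:ℕ):ℝ) = (i:ℝ)+1 := by rw [hvdef]; push_cast; ring
      have hv' : (0:ℝ) < v := by rw [hvcast]; positivity
      by_cases hb0 : β v = 0
      · have hA0 : Aa v = 0 := le_antisymm (hb0 ▸ hAale v) (hAann v)
        have hB0 : Bb v = 0 := le_antisymm (hA0 ▸ hBble v) (hBbnn v)
        simp [hRrdef, hSsdef, hA0, hB0, hb0]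
      · have hbpos : 0 < β v := lt_of_le_of_ne (hβnn v) (Ne.symm hb0)
        have hAeq : Aa v = Rr v * β v := (div_mul_cancel₀ (Aa v) hb0).symm
        have hBeq : Bb v = Ss v * β v := (div_mul_cancel₀ (Bb v) hb0).symm
        have hRS : Ss v ≤ Rr v := by
          simp only [hRrdef, hSsdef]
          gcongr
          exact hBble v
        have hβv : β v * (v:ℝ) ≤ c := by
          have := hβle v (Nat.le_add_left 1 i)
          exact (le_div_iff₀ hv').mp this
        have key : 0 ≤ (Rr v - Ss v) * (c - (v:ℝ) * β v) :=
          mul_nonneg (by linarith) (by linarith)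
        rw [← hvcast, hAeq, hBeq]
        nlinarith [key]
    calc ∑ i ∈ Finset.range m, ((i:ℝ)+1) * (Aa (i+1) - Bb (i+1))
        ≤ ∑ i ∈ Finset.range m, c * (Rr (i+1) - Ss (i+1)) := Finset.sum_le_sum hterm
      _ = c * ∑ i ∈ Finset.range m, (Rr (i+1) - Ss (i+1)) := by rw [Finset.mul_sum]
      _ ≤ c * 1 := by
          gcongr
          calc ∑ i ∈ Finset.range m, (Rr (i+1) - Ss (i+1))
              ≤ ∑ i ∈ Finset.range m, (Rr (i+1) - Rr (i+2)) := by
                apply Finset.sum_le_sum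
                intro i _
                have := hSR (i+1) (Nat.le_add_left 1 i)
                linarith
            _ = Rr 1 - Rr (m+1) := by
                have := Finset.sum_range_sub' (fun i => Rr (i+1)) m
                simpa using this
            _ ≤ Rr 1 := by
                have : 0 ≤ Rr (m+1) := div_nonneg (hAann _) (hβnn _)
                linarith
            _ ≤ 1 := by
                by_cases hb0 : β 1 = 0
                · have hA0 : Aa 1 = 0 := le_antisymm (hb0 ▸ hAale 1) (hAann 1)
                  simp [hRrdef, hA0]
                · exact div_le_one_of_le₀ (hAale 1) (hβnn 1)
      _ = c := mul_one c
  -- lift to ENNReal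
  calc ∑ i ∈ Finset.range m, ENNReal.ofReal (((i:ℝ)+1)) *
        P ((A (i+1) \ A (i+2)) ∩ {ω | U ω ≤ c/((i:ℝ)+1)})
      = ∑ i ∈ Finset.range m, ENNReal.ofReal (((i:ℝ)+1) * (Aa (i+1) - Bb (i+1))) := by
        apply Finset.sum_congr rfl
        intro i _
        have hcast : (((i+1:ℕ)):ℝ) = (i:ℝ)+1 := by push_cast; ring
        have h1 : ENNReal.ofReal ((i:ℝ)+1) *
            P ((A (i+1) \ A (i+2)) ∩ {ω | U ω ≤ c/((i:ℝ)+1)})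
            = ENNReal.ofReal (((i:ℝ)+1) *
              (P ((A (i+1) \ A (i+2)) ∩ {ω | U ω ≤ c/((i:ℝ)+1)})).toReal) := by
          rw [ENNReal.ofReal_mul (by positivity), ENNReal.ofReal_toReal (hfin _)]
        rw [h1]
        congr 1
        have := hPE (i+1)
        rw [hcast] at this
        rw [this]
    _ = ENNReal.ofReal (∑ i ∈ Finset.range m, ((i:ℝ)+1) * (Aa (i+1) - Bb (i+1))) := by
        rw [ENNReal.ofReal_sum_of_nonneg]
        intro i _
        nlinarith [hBble (i+1)]
    _ ≤ ENNReal.ofReal c := ENNReal.ofReal_le_ofReal hreal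

/-- Theorem 4.6 (first part): FDR control of the Benjamini–Liu-type step-down
procedure with threshold collection `Δ(i) = α m/(m−i+1)²` under the PRDSS
assumption of `H₁` on `H₀`. Here `khat` is the number of steps of the
step-down procedure: the largest `k ≤ m` such that for every `1 ≤ j ≤ k` at
least `j` p-values are below `Δ(j)` (equivalently `p_(j) ≤ Δ(j)` for all
`j ≤ k`), and `R` rejects the hypotheses with p-value at most `Δ(khat)`. -/
theorem FDR_control_step_down_PRDSS
    {Ω : Type*} [MeasurableSpace Ω] (P : Measure Ω) [IsProbabilityMeasure P]
    {ι : Type*} [Fintype ι] [DecidableEq ι]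
    (m : ℕ) (hmcard : Fintype.card ι = m)
    (H₀ : Finset ι) (hH₀ : H₀.Nonempty)
    (α : ℝ) (hα : 0 < α)
    (p : ι → Ω → ℝ) (hp : ∀ h, Measurable (p h))
    (hprange : ∀ h ω, p h ω ∈ Set.Icc (0:ℝ) 1)
    (hUnif : ∀ h ∈ H₀, ∀ t : ℝ, 0 ≤ t → t ≤ 1 →
      P {ω | p h ω ≤ t} ≤ ENNReal.ofReal t)
    -- the p-values of H₁ are PRDSS on H₀: for every measurable nondecreasing
    -- set D depending only on the coordinates of H₁ = H \ H₀, and every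
    -- h₀ ∈ H₀, u ↦ P(p ∈ D | p_{h₀} ≤ u) is nondecreasing
    (hPRDSS : ∀ h₀ ∈ H₀, ∀ D : Set (ι → ℝ), MeasurableSet D →
      (∀ z z' : ι → ℝ, z ∈ D → (∀ i, z i ≤ z' i) → z' ∈ D) →
      (∀ z z' : ι → ℝ, (∀ h ∉ H₀, z h = z' h) → (z ∈ D ↔ z' ∈ D)) →
      ∀ u u' : ℝ, u ≤ u' → 0 < P {ω | p h₀ ω ≤ u} →
        P {ω | (fun i => p i ω) ∈ D ∧ p h₀ ω ≤ u} / P {ω | p h₀ ω ≤ u}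
          ≤ P {ω | (fun i => p i ω) ∈ D ∧ p h₀ ω ≤ u'} / P {ω | p h₀ ω ≤ u'})
    -- threshold collection Δ(i) = α m / (m − i + 1)²
    (Δ : ℕ → ℝ) (hΔ : ∀ i, Δ i = α * m / ((m : ℝ) - i + 1) ^ 2)
    -- R is the associated step-down procedure
    (khat : Ω → ℕ) (R : Ω → Finset ι)
    (hkle : ∀ ω, khat ω ≤ m)
    (hkmem : ∀ ω, ∀ j, 1 ≤ j → j ≤ khat ω →
      j ≤ (Finset.univ.filter (fun h => p h ω ≤ Δ j)).card)
    (hkmax : ∀ ω, ∀ k, k ≤ m →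
      (∀ j, 1 ≤ j → j ≤ k →
        j ≤ (Finset.univ.filter (fun h => p h ω ≤ Δ j)).card) → k ≤ khat ω)
    (hR : ∀ ω, R ω = Finset.univ.filter (fun h => p h ω ≤ Δ (khat ω))) :
    ∫⁻ ω, ENNReal.ofReal
        (if 0 < (R ω).card
          then ((R ω ∩ H₀).card : ℝ) / ((R ω).card : ℝ) else 0) ∂P
      ≤ ENNReal.ofReal α := by
  -- basic cardinalities
  set m₀ := H₀.card with hm₀def
  have hm₀1 : 1 ≤ m₀ := Finset.card_pos.mpr hH₀
  have hm₀m : m₀ ≤ m := by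
    have := Finset.card_le_univ H₀
    rwa [hmcard] at this
  have hm1 : 1 ≤ m := le_trans hm₀1 hm₀m
  set H₁ : Finset ι := Finset.univ \ H₀ with hH₁def
  have hH₁card : H₁.card = m - m₀ := by
    rw [hH₁def, Finset.card_sdiff_of_subset (Finset.subset_univ H₀), Finset.card_univ, hmcard]
  have hH₁mem : ∀ h, h ∈ H₁ ↔ h ∉ H₀ := by
    intro h; rw [hH₁def, Finset.mem_sdiff]
    exact ⟨fun hh => hh.2, fun hh => ⟨Finset.mem_univ h, hh⟩⟩
  set c := α * m / m₀ with hcdef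
  have hc0 : 0 ≤ c := by positivity
  -- threshold monotonicity
  have hΔmono : ∀ i i' : ℕ, i ≤ i' → i' ≤ m → Δ i ≤ Δ i' := by
    intro i i' hii hi'm
    rw [hΔ, hΔ]
    have hi'r : (i':ℝ) ≤ m := by exact_mod_cast hi'm
    have hir : (i:ℝ) ≤ i' := by exact_mod_cast hii
    have h1 : (0:ℝ) < (m:ℝ) - i' + 1 := by linarith
    have h2 : (m:ℝ) - i' + 1 ≤ (m:ℝ) - i + 1 := by linarith
    apply div_le_div_of_nonneg_left (by positivity) (by positivity)
    exact pow_le_pow_left₀ (le_of_lt h1) h2 2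
  -- the decreasing family of vector sets
  set Dset : ℕ → Set (ι → ℝ) := fun v =>
    {z | ∃ j, 1 ≤ j ∧ j ≤ m + 1 - v ∧ ((H₁.filter (fun h => z h ≤ Δ j)).card < j)} with hDdef
  have hDanti : ∀ v, Dset (v+1) ⊆ Dset v := by
    intro v z hz
    obtain ⟨j, hj1, hj2, hjlt⟩ := hz
    exact ⟨j, hj1, by omega, hjlt⟩
  have hDmono : ∀ v, ∀ z z' : ι → ℝ, z ∈ Dset v → (∀ i, z i ≤ z' i) → z' ∈ Dset v := by
    intro v z z' hz hle
    obtain ⟨j, hj1, hj2, hjlt⟩ := hz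
    refine ⟨j, hj1, hj2, lt_of_le_of_lt ?_ hjlt⟩
    apply Finset.card_le_card
    apply Finset.monotone_filter_right
    intro h _ hh
    exact le_trans (hle h) hh
  have hDdep : ∀ v, ∀ z z' : ι → ℝ, (∀ h ∉ H₀, z h = z' h) → (z ∈ Dset v ↔ z' ∈ Dset v) := by
    intro v z z' hzz
    have hfil : ∀ j, H₁.filter (fun h => z h ≤ Δ j) = H₁.filter (fun h => z' h ≤ Δ j) := by
      intro j
      apply Finset.filter_congr
      intro h hh
      rw [hzz h ((hH₁mem h).mp hh)]
    constructor
    · rintro ⟨j, hj1, hj2, hjlt⟩; exact ⟨j, hj1, hj2, by rwa [← hfil j]⟩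
    · rintro ⟨j, hj1, hj2, hjlt⟩; exact ⟨j, hj1, hj2, by rwa [hfil j]⟩
  have hcardmeas : ∀ j : ℕ, Measurable (fun z : ι → ℝ => (H₁.filter (fun h => z h ≤ Δ j)).card) := by
    intro j
    have : (fun z : ι → ℝ => (H₁.filter (fun h => z h ≤ Δ j)).card)
        = fun z => ∑ h ∈ H₁, if z h ≤ Δ j then 1 else 0 := by
      funext z; exact Finset.card_filter _ _
    rw [this]
    apply Finset.measurable_sum
    intro h _
    exact Measurable.ite ((measurable_pi_apply h) measurableSet_Iic)
      measurable_const measurable_const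
  have hDmeas : ∀ v, MeasurableSet (Dset v) := by
    intro v
    have : Dset v = ⋃ j ∈ Set.Icc 1 (m + 1 - v),
        {z : ι → ℝ | (H₁.filter (fun h => z h ≤ Δ j)).card < j} := by
      ext z
      simp only [hDdef, Set.mem_setOf_eq, Set.mem_iUnion, Set.mem_Icc, exists_prop]
      constructor
      · rintro ⟨j, hj1, hj2, hjlt⟩; exact ⟨j, ⟨hj1, hj2⟩, hjlt⟩
      · rintro ⟨j, ⟨hj1, hj2⟩, hjlt⟩; exact ⟨j, hj1, hj2, hjlt⟩
    rw [this]
    apply MeasurableSet.biUnion (Set.to_countable _)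
    intro j _
    exact (hcardmeas j) (show MeasurableSet (Set.Iio j) from trivial)
  -- k₁ : the step-down count restricted to H₁
  set k₁ : Ω → ℕ := fun ω => kfun H₁ Δ m (fun i => p i ω) with hk₁def
  have hk₁le : ∀ ω, k₁ ω ≤ m := fun ω => kfun_le H₁ Δ m _
  have hk₁spec : ∀ ω, ∀ j, 1 ≤ j → j ≤ k₁ ω →
      j ≤ ((H₁.filter (fun h => p h ω ≤ Δ j)).card) := by
    intro ω j hj1 hjle
    exact kfun_spec H₁ Δ m (fun i => p i ω) hj1 hjle
  have hk₁max : ∀ ω, ∀ w, w ≤ m →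
      (∀ j, 1 ≤ j → j ≤ w → j ≤ ((H₁.filter (fun h => p h ω ≤ Δ j)).card)) → w ≤ k₁ ω := by
    intro ω w hwm hw
    exact kfun_max H₁ Δ m (fun i => p i ω) hwm hw
  -- membership characterization of Dset via k₁
  have hAmem : ∀ ω, ∀ v : ℕ, 1 ≤ v → ((fun i => p i ω) ∈ Dset v ↔ v ≤ m - k₁ ω) := by
    intro ω v hv1
    by_cases hvm : v ≤ m
    · constructor
      · rintro ⟨j, hj1, hj2, hjlt⟩
        have hjlt' : (H₁.filter (fun h => p h ω ≤ Δ j)).card < j := hjlt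
        have hnot : ¬ (m + 1 - v ≤ k₁ ω) := by
          intro hle
          have := hk₁spec ω j hj1 (le_trans hj2 hle)
          omega
        have := hk₁le ω
        omega
      · intro hle
        have hlt : k₁ ω < m + 1 - v := by have := hk₁le ω; omega
        obtain ⟨j, hj1, hjw, hjlt⟩ := kfun_not H₁ Δ m (fun i => p i ω) hlt (by omega)
        exact ⟨j, hj1, hjw, hjlt⟩
    · constructor
      · rintro ⟨j, hj1, hj2, hjlt⟩
        omega
      · intro hle
        have := hk₁le ω
        omega
  -- the events
  set Asets : ℕ → Set Ω := fun v => {ω | (fun i => p i ω) ∈ Dset v} with hAsetsdef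
  have hpvec : Measurable (fun ω => (fun i => p i ω)) :=
    measurable_pi_lambda _ (fun i => hp i)
  have hAmeas : ∀ v, MeasurableSet (Asets v) := fun v => hpvec (hDmeas v)
  have hAanti : ∀ v, Asets (v+1) ⊆ Asets v := fun v ω hω => hDanti v hω
  -- pointwise bound
  have hpoint : ∀ ω, ENNReal.ofReal
      (if 0 < (R ω).card then ((R ω ∩ H₀).card : ℝ) / ((R ω).card : ℝ) else 0)
      ≤ ∑ h₀ ∈ H₀, ∑ i ∈ Finset.range m,
          Set.indicator ((Asets (i+1) \ Asets (i+2)) ∩ {ω' | p h₀ ω' ≤ c / ((i:ℝ)+1)})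
            (fun _ => ENNReal.ofReal (((i:ℝ)+1)/m)) ω := by
    intro ω
    by_cases hq : 0 < (R ω ∩ H₀).card
    swap
    · have hq0 : (R ω ∩ H₀).card = 0 := by omega
      have : (if 0 < (R ω).card then ((R ω ∩ H₀).card : ℝ) / ((R ω).card : ℝ) else 0) = 0 := by
        rw [hq0]; simp
      rw [this, ENNReal.ofReal_zero]
      exact zero_le
    · obtain ⟨hstar, hstarmem, hstarmin⟩ := Finset.exists_min_image H₀ (fun h => p h ω) hH₀
      set τ := p hstar ω with hτdef
      obtain ⟨h₀r, h₀rmem⟩ := Finset.card_pos.mp hq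
      have h₀rR : h₀r ∈ R ω := (Finset.mem_inter.mp h₀rmem).1
      have h₀rH₀ : h₀r ∈ H₀ := (Finset.mem_inter.mp h₀rmem).2
      have hpr : p h₀r ω ≤ Δ (khat ω) := by
        rw [hR ω] at h₀rR
        exact (Finset.mem_filter.mp h₀rR).2
      have hτK : τ ≤ Δ (khat ω) := le_trans (hstarmin h₀r h₀rH₀) hpr
      set J := (H₁.filter (fun h => p h ω < τ)).card with hJdef
      have hJle : J ≤ m - m₀ := by
        rw [← hH₁card]
        exact Finset.card_le_card (Finset.filter_subset _ _)
      have hJm : J + 1 ≤ m := by omega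
      -- the false nulls below τ together with hstar are all rejected
      have hSsub : insert hstar (H₁.filter (fun h => p h ω < τ)) ⊆ R ω := by
        intro h hh
        rw [hR ω, Finset.mem_filter]
        refine ⟨Finset.mem_univ h, ?_⟩
        rcases Finset.mem_insert.mp hh with rfl | hh'
        · exact hτK
        · exact le_trans (le_of_lt (Finset.mem_filter.mp hh').2) hτK
      have hstarnot : hstar ∉ H₁.filter (fun h => p h ω < τ) := by
        intro hmem
        exact ((hH₁mem hstar).mp (Finset.mem_of_mem_filter _ hmem)) hstarmem
      have hnRJ : J + 1 ≤ (R ω).card := by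
        have := Finset.card_le_card hSsub
        rwa [Finset.card_insert_of_notMem hstarnot] at this
      -- khat ≥ J + 1
      have hkJ : J + 1 ≤ khat ω := by
        refine le_trans (le_max_right (khat ω) (J+1))
          (hkmax ω _ (max_le (hkle ω) hJm) ?_)
        intro j hj1 hjle
        by_cases hjk : j ≤ khat ω
        · exact hkmem ω j hj1 hjk
        · push_neg at hjk
          have hjm : j ≤ m := le_trans hjle (max_le (hkle ω) hJm)
          have hΔle : Δ (khat ω) ≤ Δ j := hΔmono _ _ (le_of_lt hjk) hjm
          have hsub2 : R ω ⊆ Finset.univ.filter (fun h => p h ω ≤ Δ j) := by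
            intro h hh
            rw [hR ω, Finset.mem_filter] at hh
            exact Finset.mem_filter.mpr ⟨Finset.mem_univ h, le_trans hh.2 hΔle⟩
          have hjJ1 : j ≤ J + 1 := by omega
          exact le_trans hjJ1 (le_trans hnRJ (Finset.card_le_card hsub2))
      -- τ ≤ Δ (J+1)
      have hτJ : τ ≤ Δ (J+1) := by
        by_contra hcon
        push_neg at hcon
        have hmem := hkmem ω (J+1) (by omega) hkJ
        have hsub3 : Finset.univ.filter (fun h => p h ω ≤ Δ (J+1))
            ⊆ H₁.filter (fun h => p h ω < τ) := by
          intro h hh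
          have hple : p h ω ≤ Δ (J+1) := (Finset.mem_filter.mp hh).2
          have hplt : p h ω < τ := lt_of_le_of_lt hple hcon
          have hhH₁ : h ∈ H₁ := by
            rw [hH₁mem]
            intro hhH₀
            exact absurd hplt (not_lt.mpr (hstarmin h hhH₀))
          exact Finset.mem_filter.mpr ⟨hhH₁, hplt⟩
        have := le_trans hmem (Finset.card_le_card hsub3)
        omega
      -- for every j ≤ J, at least j p-values of H₁ are below Δ j
      have hPkJ : ∀ j, 1 ≤ j → j ≤ J → j ≤ ((H₁.filter (fun h => p h ω ≤ Δ j)).card) := by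
        intro j hj1 hjJ
        have hjk : j ≤ khat ω := by omega
        have hmem := hkmem ω j hj1 hjk
        by_cases hτj : τ ≤ Δ j
        · have hsub : H₁.filter (fun h => p h ω < τ) ⊆ H₁.filter (fun h => p h ω ≤ Δ j) := by
            apply Finset.monotone_filter_right
            intro h _ hh
            exact le_trans (le_of_lt hh) hτj
          exact le_trans hjJ (Finset.card_le_card hsub)
        · push_neg at hτj
          have hsub4 : Finset.univ.filter (fun h => p h ω ≤ Δ j)
              ⊆ H₁.filter (fun h => p h ω ≤ Δ j) := by
            intro h hh
            have hple := (Finset.mem_filter.mp hh).2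
            have hhH₁ : h ∈ H₁ := by
              rw [hH₁mem]
              intro hhH₀
              exact absurd (le_trans (hstarmin h hhH₀) hple) (not_le.mpr hτj)
            exact Finset.mem_filter.mpr ⟨hhH₁, hple⟩
          exact le_trans hmem (Finset.card_le_card hsub4)
      have hk1J : J ≤ k₁ ω := hk₁max ω J (by omega) hPkJ
      have hk1m₀ : k₁ ω + m₀ ≤ m := by
        rcases Nat.eq_zero_or_pos (k₁ ω) with h0 | hpos
        · omega
        · have := hk₁spec ω (k₁ ω) hpos le_rfl
          have hle2 : (H₁.filter (fun h => p h ω ≤ Δ (k₁ ω))).card ≤ H₁.card :=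
            Finset.card_le_card (Finset.filter_subset _ _)
          omega
      have hKk1 : k₁ ω ≤ khat ω := by
        apply hkmax ω _ (hk₁le ω)
        intro j hj1 hjle
        refine le_trans (hk₁spec ω j hj1 hjle) (Finset.card_le_card ?_)
        exact Finset.filter_subset_filter _ (Finset.subset_univ H₁)
      -- |R| ≥ q + k₁
      have hqk1 : (R ω ∩ H₀).card + k₁ ω ≤ (R ω).card := by
        rcases Nat.eq_zero_or_pos (k₁ ω) with h0 | hpos
        · rw [h0]
          simpa using Finset.card_le_card (Finset.inter_subset_left (s₁ := R ω))
        · have hfil : H₁.filter (fun h => p h ω ≤ Δ (k₁ ω)) ⊆ R ω := by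
            intro h hh
            rw [hR ω, Finset.mem_filter]
            exact ⟨Finset.mem_univ h,
              le_trans (Finset.mem_filter.mp hh).2 (hΔmono _ _ hKk1 (hkle ω))⟩
          have hdisj : Disjoint (R ω ∩ H₀) (H₁.filter (fun h => p h ω ≤ Δ (k₁ ω))) := by
            rw [Finset.disjoint_left]
            intro a ha hb
            exact ((hH₁mem a).mp (Finset.mem_of_mem_filter _ hb)) (Finset.mem_inter.mp ha).2
          calc (R ω ∩ H₀).card + k₁ ω
              ≤ (R ω ∩ H₀).card + (H₁.filter (fun h => p h ω ≤ Δ (k₁ ω))).card := by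
                have := hk₁spec ω (k₁ ω) hpos le_rfl
                omega
            _ = ((R ω ∩ H₀) ∪ H₁.filter (fun h => p h ω ≤ Δ (k₁ ω))).card :=
                (Finset.card_union_of_disjoint hdisj).symm
            _ ≤ (R ω).card := Finset.card_le_card
                (Finset.union_subset (Finset.inter_subset_left) hfil)
      have hnRm : (R ω).card ≤ m := by
        have := Finset.card_le_univ (R ω)
        rwa [hmcard] at this
      have hnRpos : 0 < (R ω).card :=
        lt_of_lt_of_le hq (Finset.card_le_card Finset.inter_subset_left)
      set V := m - k₁ ω with hVdef
      have hV1 : 1 ≤ V := by omega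
      have hVm : V ≤ m := by omega
      have hVm₀ : m₀ ≤ V := by omega
      have hVcast : ((V:ℕ):ℝ) = (m:ℝ) - (k₁ ω : ℝ) := by
        rw [hVdef, Nat.cast_sub (hk₁le ω)]
      -- τ ≤ c / V
      have hτV : τ ≤ c / (V:ℝ) := by
        have h1 : τ ≤ α * m / ((m:ℝ) - ((J:ℝ)+1) + 1)^2 := by
          have h := hτJ
          rw [hΔ (J+1)] at h
          have heq : ((m:ℝ) - ((J+1:ℕ):ℝ) + 1) = ((m:ℝ) - ((J:ℝ)+1) + 1) := by
            push_cast; ring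
          rwa [heq] at h
        have hJk1 : (J:ℝ) ≤ (k₁ ω : ℝ) := by exact_mod_cast hk1J
        have hm₀V : (m₀:ℝ) ≤ (V:ℝ) := by exact_mod_cast hVm₀
        have hm₀pos : (0:ℝ) < m₀ := by exact_mod_cast hm₀1
        have hVpos : (0:ℝ) < (V:ℝ) := by exact_mod_cast hV1
        have hden1 : (V:ℝ) ≤ (m:ℝ) - ((J:ℝ)+1) + 1 := by
          rw [hVcast]; linarith
        have h2 : α * m / ((m:ℝ) - ((J:ℝ)+1) + 1)^2 ≤ α * m / ((m₀:ℝ) * (V:ℝ)) := by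
          apply div_le_div_of_nonneg_left (by positivity) (by positivity)
          nlinarith
        have h3 : c / (V:ℝ) = α * m / ((m₀:ℝ) * (V:ℝ)) := by
          rw [hcdef, div_div]
        linarith [h1, h2, h3.le, h3.ge]
      -- FDP ≤ V/m
      have hfrac : ((R ω ∩ H₀).card : ℝ) / ((R ω).card : ℝ) ≤ (V:ℝ)/(m:ℝ) := by
        rw [div_le_div_iff₀ (by exact_mod_cast hnRpos) (by exact_mod_cast hm1)]
        have hq' : ((R ω ∩ H₀).card : ℝ) + (k₁ ω : ℝ) ≤ ((R ω).card : ℝ) := by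
          exact_mod_cast hqk1
        have hR' : ((R ω).card : ℝ) ≤ (m:ℝ) := by exact_mod_cast hnRm
        have hk1' : (0:ℝ) ≤ (k₁ ω : ℝ) := Nat.cast_nonneg _
        rw [hVcast]
        nlinarith
      -- now assemble via the indicator at (hstar, V-1)
      have hi1 : (V - 1) + 1 = V := by omega
      have hc1 : (((V-1:ℕ)):ℝ) + 1 = (V:ℝ) := by
        rw [Nat.cast_sub hV1]; ring
      have hωmem : ω ∈ (Asets ((V-1)+1) \ Asets ((V-1)+2)) ∩
          {ω' | p hstar ω' ≤ c / ((((V-1:ℕ)):ℝ)+1)} := by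
        constructor
        · constructor
          · rw [hi1]
            exact (hAmem ω V hV1).mpr (le_of_eq hVdef)
          · intro hcon
            rw [show (V-1)+2 = V+1 by omega] at hcon
            have := (hAmem ω (V+1) (by omega)).mp hcon
            omega
        · show p hstar ω ≤ c / ((((V-1:ℕ)):ℝ)+1)
          rw [hc1]
          exact hτV
      rw [if_pos hnRpos]
      calc ENNReal.ofReal (((R ω ∩ H₀).card : ℝ) / ((R ω).card : ℝ))
          ≤ ENNReal.ofReal ((V:ℝ)/(m:ℝ)) := ENNReal.ofReal_le_ofReal hfrac
        _ = Set.indicator ((Asets ((V-1)+1) \ Asets ((V-1)+2)) ∩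
              {ω' | p hstar ω' ≤ c / ((((V-1:ℕ)):ℝ)+1)})
              (fun _ => ENNReal.ofReal (((((V-1:ℕ)):ℝ)+1)/m)) ω := by
            rw [Set.indicator_of_mem hωmem, hc1]
        _ ≤ ∑ i ∈ Finset.range m,
              Set.indicator ((Asets (i+1) \ Asets (i+2)) ∩ {ω' | p hstar ω' ≤ c / ((i:ℝ)+1)})
                (fun _ => ENNReal.ofReal (((i:ℝ)+1)/m)) ω := by
            refine Finset.single_le_sum (f := fun i => Set.indicator
              ((Asets (i+1) \ Asets (i+2)) ∩ {ω' | p hstar ω' ≤ c / ((i:ℝ)+1)})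
              (fun _ => ENNReal.ofReal (((i:ℝ)+1)/m)) ω) (fun i _ => zero_le) ?_
            rw [Finset.mem_range]
            omega
        _ ≤ ∑ h₀ ∈ H₀, ∑ i ∈ Finset.range m,
              Set.indicator ((Asets (i+1) \ Asets (i+2)) ∩ {ω' | p h₀ ω' ≤ c / ((i:ℝ)+1)})
                (fun _ => ENNReal.ofReal (((i:ℝ)+1)/m)) ω :=
            Finset.single_le_sum (f := fun h₀ => ∑ i ∈ Finset.range m, Set.indicator
              ((Asets (i+1) \ Asets (i+2)) ∩ {ω' | p h₀ ω' ≤ c / ((i:ℝ)+1)})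
              (fun _ => ENNReal.ofReal (((i:ℝ)+1)/m)) ω) (fun h₀ _ => zero_le) hstarmem
  -- integrate
  have hEmeas : ∀ (h₀ : ι) (i : ℕ),
      MeasurableSet ((Asets (i+1) \ Asets (i+2)) ∩ {ω' | p h₀ ω' ≤ c / ((i:ℝ)+1)}) :=
    fun h₀ i => ((hAmeas (i+1)).diff (hAmeas (i+2))).inter ((hp h₀) measurableSet_Iic)
  have hsup' : ∀ h₀ ∈ H₀, ∀ t : ℝ, 0 ≤ t → P {ω | p h₀ ω ≤ t} ≤ ENNReal.ofReal t := by
    intro h₀ hh₀ t ht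
    by_cases ht1 : t ≤ 1
    · exact hUnif h₀ hh₀ t ht ht1
    · calc P {ω | p h₀ ω ≤ t} ≤ 1 := prob_le_one
        _ = ENNReal.ofReal 1 := ENNReal.ofReal_one.symm
        _ ≤ ENNReal.ofReal t := ENNReal.ofReal_le_ofReal (le_of_not_ge ht1)
  have hDC : ∀ h₀ ∈ H₀,
      ∑ i ∈ Finset.range m, ENNReal.ofReal (((i:ℝ)+1)) *
        P ((Asets (i+1) \ Asets (i+2)) ∩ {ω | p h₀ ω ≤ c/((i:ℝ)+1)}) ≤ ENNReal.ofReal c := by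
    intro h₀ hh₀
    apply DC_core P m c hc0 (p h₀) Asets hAmeas (hp h₀) (hsup' h₀ hh₀) hAanti
    intro v hv hpos
    have hvr : (0:ℝ) < (v:ℝ) := by exact_mod_cast hv
    have huu' : c/((v:ℝ)+1) ≤ c/(v:ℝ) :=
      div_le_div_of_nonneg_left hc0 hvr (by linarith)
    have := hPRDSS h₀ hh₀ (Dset (v+1)) (hDmeas (v+1)) (hDmono (v+1)) (hDdep (v+1))
      (c/((v:ℝ)+1)) (c/(v:ℝ)) huu' hpos
    have hseteq : ∀ u : ℝ, {ω | (fun i => p i ω) ∈ Dset (v+1) ∧ p h₀ ω ≤ u}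
        = Asets (v+1) ∩ {ω | p h₀ ω ≤ u} := by
      intro u
      ext ω
      simp only [Set.mem_inter_iff, Set.mem_setOf_eq, hAsetsdef]
    rwa [hseteq, hseteq] at this
  calc ∫⁻ ω, ENNReal.ofReal
        (if 0 < (R ω).card then ((R ω ∩ H₀).card : ℝ) / ((R ω).card : ℝ) else 0) ∂P
      ≤ ∫⁻ ω, ∑ h₀ ∈ H₀, ∑ i ∈ Finset.range m,
          Set.indicator ((Asets (i+1) \ Asets (i+2)) ∩ {ω' | p h₀ ω' ≤ c / ((i:ℝ)+1)})
            (fun _ => ENNReal.ofReal (((i:ℝ)+1)/m)) ω ∂P := lintegral_mono hpoint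
    _ = ∑ h₀ ∈ H₀, ∑ i ∈ Finset.range m, ENNReal.ofReal (((i:ℝ)+1)/m) *
          P ((Asets (i+1) \ Asets (i+2)) ∩ {ω' | p h₀ ω' ≤ c / ((i:ℝ)+1)}) := by
        rw [lintegral_finset_sum]
        · apply Finset.sum_congr rfl
          intro h₀ _
          rw [lintegral_finset_sum]
          · apply Finset.sum_congr rfl
            intro i _
            exact lintegral_indicator_const (hEmeas h₀ i) _
          · intro i _
            exact measurable_const.indicator (hEmeas h₀ i)
        · intro h₀ _
          apply Finset.measurable_sum
          intro i _
          exact measurable_const.indicator (hEmeas h₀ i)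
    _ ≤ ∑ h₀ ∈ H₀, ENNReal.ofReal (c/m) := by
        apply Finset.sum_le_sum
        intro h₀ hh₀
        have hmr : (0:ℝ) < (m:ℝ) := by exact_mod_cast hm1
        calc ∑ i ∈ Finset.range m, ENNReal.ofReal (((i:ℝ)+1)/m) *
              P ((Asets (i+1) \ Asets (i+2)) ∩ {ω' | p h₀ ω' ≤ c / ((i:ℝ)+1)})
            = ENNReal.ofReal (1/m) * ∑ i ∈ Finset.range m, ENNReal.ofReal (((i:ℝ)+1)) *
              P ((Asets (i+1) \ Asets (i+2)) ∩ {ω' | p h₀ ω' ≤ c / ((i:ℝ)+1)}) := by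
              rw [Finset.mul_sum]
              apply Finset.sum_congr rfl
              intro i _
              rw [← mul_assoc, ← ENNReal.ofReal_mul (by positivity)]
              congr 2
              field_simp
          _ ≤ ENNReal.ofReal (1/m) * ENNReal.ofReal c := by
              gcongr
              exact hDC h₀ hh₀
          _ = ENNReal.ofReal (c/m) := by
              rw [← ENNReal.ofReal_mul (by positivity)]
              congr 1
              field_simp
    _ = ENNReal.ofReal α := by
        rw [Finset.sum_const, ← hm₀def, nsmul_eq_mul]
        rw [← ENNReal.ofReal_natCast m₀, ← ENNReal.ofReal_mul (by positivity)]
        congr 1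
        rw [hcdef]
        have hm₀r : ((m₀:ℕ):ℝ) ≠ 0 := by positivity
        have hmr : ((m:ℕ):ℝ) ≠ 0 := by positivity
        field_simp
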